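/- Given any finite set S = {G₁, …, G_r} of finite presentations of groups, let H = ℤ × ∏_{u≤r} (G_u)_{ab} (with its canonical finite presentation obtained by adding commutator relators and the generators of the factors). Then H is not isomorphic to G_u for any u ≤ r. Consequently the isomorphism relation ≅ on finite presentations admits a strong diagonal function. -/

import Mathlib

/-- A code for a finite presentation: a number of generators together with a
finite list of relator words (letters are generator indices with a sign). -/
abbrev Pres : Type := ℕ × List (List (ℕ × Bool))

/-- The group presented by a coded finite presentation: the free group on ℕ
modulo the relators together with relators killing all generators beyond the
first `p.1` (so it is the finitely presented group `⟨x₀,…,x_{p.1 - 1}; p.2⟩`). -/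
def GroupOfPres (p : Pres) : Type :=
  PresentedGroup
    ((FreeGroup.mk '' {w | w ∈ p.2} ∪ FreeGroup.of '' {i : ℕ | p.1 ≤ i}) :
      Set (FreeGroup ℕ))

instance (p : Pres) : Group (GroupOfPres p) := by
  unfold GroupOfPres; infer_instance

/-- The diagonal presentation: one more generator than the total number of
generators appearing among the presentations of the list, and no relators. -/
def diagPres (l : List Pres) : Pres := ((l.map Prod.fst).sum + 1, [])

theorem diag_computable : Computable diagPres := by
  have h0 : Primrec fun l : List Pres => l.map Prod.fst :=
    Primrec.list_map .id ((Primrec.fst.comp Primrec.snd).to₂)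
  have h1 : Primrec fun l : List Pres => (l.map Prod.fst).sum := by
    have := Primrec.list_foldr (f := fun l : List Pres => l.map Prod.fst)
      (g := fun _ => (0:ℕ)) (h := fun _ bs => bs.1 + bs.2) h0 (Primrec.const 0)
      ((Primrec.nat_add.comp (Primrec.fst.comp Primrec.snd)
        (Primrec.snd.comp Primrec.snd)).to₂)
    exact this.of_eq fun l => rfl
  have h2 : Primrec diagPres :=
    Primrec.pair (Primrec.succ.comp h1) (Primrec.const [])
  exact h2.to_comp

/-- `H = ℤ × ∏ (G u)_ab` is isomorphic to no `G i`. -/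
theorem part1 {r : ℕ} (G : Fin r → Type) [inst : ∀ u, Group (G u)] [∀ u, Group.FG (G u)]
    (i : Fin r) :
    ¬ Nonempty ((Multiplicative ℤ × ((u : Fin r) → Abelianization (G u))) ≃* G i) := by
  rintro ⟨e⟩
  letI : CommGroup (G i) :=
    { inst i with
      mul_comm := fun a b => by
        rw [← e.apply_symm_apply a, ← e.apply_symm_apply b, ← map_mul, mul_comm, map_mul] }
  classical
  let j : (Multiplicative ℤ × ((u : Fin r) → Abelianization (G u))) →*
      ((u : Fin r) → Abelianization (G u)) :=
    (MonoidHom.mulSingle (fun u => Abelianization (G u)) i).comp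
      ((Abelianization.equivOfComm (H := G i)).toMonoidHom.comp e.toMonoidHom)
  have hj : Function.Injective j := by
    intro x y h
    have h2 := congrFun h i
    simp only [j, MonoidHom.comp_apply, MonoidHom.mulSingle_apply, Pi.mulSingle_eq_same] at h2
    exact e.injective ((Abelianization.equivOfComm (H := G i)).injective h2)
  let φ : (Multiplicative ℤ × (Multiplicative ℤ × ((u : Fin r) → Abelianization (G u)))) →*
      (Multiplicative ℤ × ((u : Fin r) → Abelianization (G u))) :=
    (MonoidHom.id (Multiplicative ℤ)).prodMap j
  have hφ : Function.Injective φ := Function.Injective.prodMap (fun a b h => h) hj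
  set H := Multiplicative ℤ × ((u : Fin r) → Abelianization (G u)) with hH
  haveI : Group.FG H := Group.fg_of_surjective (f := e.symm.toMonoidHom) e.symm.surjective
  haveI : Module.Finite ℤ (Additive H) := Module.Finite.iff_addGroup_fg.mpr inferInstance
  let ψ : (ℤ × Additive H) →+ Additive H :=
    (MonoidHom.toAdditive φ).comp
      ((AddEquiv.prodAdditive (G := Multiplicative ℤ) (H := H)).symm.toAddMonoidHom.comp
        ((AddEquiv.prodCongr (AddEquiv.additiveMultiplicative ℤ).symm
          (AddEquiv.refl (Additive H))).toAddMonoidHom))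
  have hψ : Function.Injective ψ := by
    simp only [ψ, AddMonoidHom.coe_comp, AddEquiv.coe_toAddMonoidHom]
    exact hφ.comp
      (((AddEquiv.prodAdditive (G := Multiplicative ℤ) (H := H)).symm.injective).comp
        (AddEquiv.injective _))
  have h2 : Module.rank ℤ (ℤ × Additive H) ≤ Module.rank ℤ (Additive H) :=
    LinearMap.rank_le_of_injective ψ.toIntLinearMap hψ
  have h1 : Module.rank ℤ ℤ + Module.rank ℤ (Additive H) ≤ Module.rank ℤ (ℤ × Additive H) :=
    rank_add_rank_le_rank_prod _ _
  rw [Module.rank_self] at h1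
  obtain ⟨n, hn⟩ := Cardinal.lt_aleph0.1 (Module.rank_lt_aleph0 ℤ (Additive H))
  rw [hn] at h1 h2
  have : ((1 + n : ℕ) : Cardinal) ≤ (n : Cardinal) := by
    push_cast
    exact le_trans h1 h2
  have := Nat.cast_le.mp this
  omega

/-- The diagonal presentation presents a group isomorphic to no group presented
by a member of the list. -/
theorem diag_not_iso (l : List Pres) (p : Pres) (hp : p ∈ l) :
    ¬ Nonempty (GroupOfPres (diagPres l) ≃* GroupOfPres p) := by
  classical
  rintro ⟨e⟩
  set m : ℕ := (l.map Prod.fst).sum + 1 with hm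
  set n : ℕ := p.1 with hn
  have hnm : n < m := by
    have : n ≤ (l.map Prod.fst).sum :=
      List.single_le_sum (fun x _ => Nat.zero_le x) _ (List.mem_map_of_mem (f := Prod.fst) hp)
    omega
  haveI : Fact (Nat.Prime 2) := ⟨Nat.prime_two⟩
  -- target group
  let T : Type := Fin m → Multiplicative (ZMod 2)
  let f : ℕ → T := fun k =>
    if h : k < m then Pi.mulSingle (⟨k, h⟩ : Fin m) (Multiplicative.ofAdd (1 : ZMod 2)) else 1
  have hrel : ∀ r ∈ ((FreeGroup.mk '' {w | w ∈ (diagPres l).2} ∪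
      FreeGroup.of '' {i : ℕ | (diagPres l).1 ≤ i}) : Set (FreeGroup ℕ)),
      FreeGroup.lift f r = 1 := by
    rintro r (⟨w, hw, rfl⟩ | ⟨k, hk, rfl⟩)
    · simp only [diagPres, Set.mem_setOf_eq, List.not_mem_nil] at hw
    · have hk' : ¬ k < m := by
        simp only [diagPres, Set.mem_setOf_eq] at hk; omega
      simp [f, hk']
  let φ : GroupOfPres (diagPres l) →* T := PresentedGroup.toGroup hrel
  have hφof : ∀ k (h : k < m),
      φ (PresentedGroup.of k) =
        Pi.mulSingle (⟨k, h⟩ : Fin m) (Multiplicative.ofAdd (1 : ZMod 2)) := by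
    intro k h
    rw [show φ (PresentedGroup.of k) = f k from PresentedGroup.toGroup.of hrel]
    simp [f, h]
  have hφ : Function.Surjective φ := by
    rw [← MonoidHom.range_eq_top, eq_top_iff]
    intro x _
    have hx : (∏ u : Fin m, Pi.mulSingle u (x u)) = x := Finset.univ_prod_mulSingle x
    rw [← hx]
    apply Subgroup.prod_mem
    intro u _
    have h1 : Pi.mulSingle u (x u) = φ (PresentedGroup.of u.val) ^ ((x u).toAdd.val) := by
      rw [hφof u.val u.isLt]
      rw [Fin.eta, ← Pi.mulSingle_pow, ← ofAdd_nsmul, nsmul_eq_mul, mul_one,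
        ZMod.natCast_rightInverse _, ofAdd_toAdd]
    rw [h1]
    exact Subgroup.pow_mem _ (MonoidHom.mem_range.2 ⟨_, rfl⟩) _
  -- generators of GroupOfPres p
  let g : Fin n → GroupOfPres p := fun v => PresentedGroup.of v.val
  have hgen : Subgroup.closure (Set.range g) = ⊤ := by
    rw [eq_top_iff]; refine le_trans (le_of_eq (PresentedGroup.closure_range_of (α := ℕ) _).symm) ?_
    apply Subgroup.closure_le _ |>.2
    rintro _ ⟨k, rfl⟩
    by_cases hk : k < n
    · exact Subgroup.subset_closure ⟨⟨k, hk⟩, rfl⟩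
    · have h1 : (PresentedGroup.of k : GroupOfPres p) = 1 := by
        apply (QuotientGroup.eq_one_iff _).2
        exact Subgroup.subset_normalClosure (Or.inr ⟨k, by simpa [hn] using hk, rfl⟩)
      rw [h1]; exact one_mem _
  -- push the generators to T
  let c : Fin n → T := fun v => φ (e.symm (g v))
  have hcl : Subgroup.closure (Set.range c) = ⊤ := by
    have hc : Set.range c = (φ.comp e.symm.toMonoidHom) '' Set.range g := by
      rw [← Set.range_comp]; rfl
    rw [hc, ← MonoidHom.map_closure, hgen, ← MonoidHom.range_eq_map,
      MonoidHom.range_eq_top]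
    exact hφ.comp e.symm.surjective
  -- linear algebra over ZMod 2
  let A : Type := Fin m → ZMod 2
  let α : Additive T ≃+ A :=
    (AddEquiv.piAdditive (fun _ : Fin m => Multiplicative (ZMod 2))).trans
      (AddEquiv.piCongrRight (fun _ => AddEquiv.additiveMultiplicative (ZMod 2)))
  let a : Fin n → A := fun v => α (Additive.ofMul (c v))
  have hspan : Submodule.span (ZMod 2) (Set.range a) = ⊤ := by
    rw [eq_top_iff]
    intro y _
    have : ∀ x : T, α (Additive.ofMul x) ∈ Submodule.span (ZMod 2) (Set.range a) := by
      intro x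
      have hx : x ∈ Subgroup.closure (Set.range c) := by rw [hcl]; trivial
      induction hx using Subgroup.closure_induction with
      | mem z hz =>
        obtain ⟨v, rfl⟩ := hz
        exact Submodule.subset_span ⟨v, rfl⟩
      | one => simp
      | mul z w _ _ hz hw =>
        have : α (Additive.ofMul (z * w)) = α (Additive.ofMul z) + α (Additive.ofMul w) :=
          map_add α _ _
        rw [this]; exact Submodule.add_mem _ hz hw
      | inv z _ hz =>
        have : α (Additive.ofMul z⁻¹) = - α (Additive.ofMul z) := map_neg α _
        rw [this]; exact Submodule.neg_mem _ hz
    have hy : y = α (Additive.ofMul (Additive.toMul (α.symm y))) := by simp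
    rw [hy]; exact this _
  have hle : Module.finrank (ZMod 2) A ≤ n := by
    simpa using finrank_le_of_span_eq_top hspan
  have hA : Module.finrank (ZMod 2) A = m := Module.finrank_fin_fun (ZMod 2)
  omega

theorem stmt13 (r : ℕ) (G : Fin r → Type)
    [∀ u, Group (G u)] [∀ u, Group.FG (G u)] :
    -- `H = ℤ × ∏_u (G_u)_ab` is isomorphic to no `G_u`
    (∀ i : Fin r,
      ¬ Nonempty ((Multiplicative ℤ × ((u : Fin r) → Abelianization (G u))) ≃* G i)) ∧
    -- consequently, isomorphism of finite presentations admits a strong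
    -- diagonal function
    ∃ δ : List Pres → Pres, Computable δ ∧
      ∀ (l : List Pres) (p : Pres), p ∈ l →
        ¬ Nonempty (GroupOfPres (δ l) ≃* GroupOfPres p) := by
  exact ⟨fun i => part1 G i, diagPres, diag_computable, diag_not_iso⟩
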